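/- For every p ∈ {−N,…,N}, all pairs (τ_j, f_j) ∈ ℝ², all c_j ∈ ℂ and h_j ∈ ℂ^K (j = 1,…,R), and any family of vectors d_l ∈ ℂ^K that is L-periodic in l, the following identity holds: Σ_{j=1}^R c_j·(1/L)·Σ_{k,l=−N}^{N} d_l^H h_j·e^{i2πk(p−l)/L}·e^{i2π(p f_j − k τ_j)} = Σ_{j=1}^R c_j·Σ_{k,l=−N}^{N} D_N(k/L − f_j)·D_N(l/L − τ_j)·d_{p−l}^H h_j·e^{i2πpk/L}. -/

import Mathlib

open MeasureTheory ProbabilityTheory Matrix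

noncomputable section

namespace Blind2D

/-- `L = 2N+1` as a real number. -/
def Lr (N : ℕ) : ℝ := 2 * N + 1

/-- Index set `{-N, …, N}` encoded as `Fin (2N+1)`. -/
abbrev Idx (N : ℕ) := Fin (2 * N + 1)

/-- the integer in `{-N,…,N}` corresponding to an index. -/
def toZ (N : ℕ) (i : Idx N) : ℤ := (i : ℤ) - (N : ℤ)

/-- the real number corresponding to an index. -/
def tv (N : ℕ) (i : Idx N) : ℝ := (toZ N i : ℝ)

/-- `e^{i 2π x}` for real `x`. -/
def e2 (x : ℝ) : ℂ := Complex.exp (Complex.I * (2 * Real.pi * x))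

/-- `q`-th derivative of the Dirichlet kernel `D_N`. -/
def dirichletD (N : ℕ) (q : ℕ) (t : ℝ) : ℂ :=
  (Lr N : ℂ)⁻¹ * ∑ r : Idx N, (Complex.I * (2 * Real.pi * tv N r)) ^ q * e2 (t * tv N r)

/-- the Dirichlet kernel `D_N(t) = (1/L) ∑_{r=-N}^N e^{i2πtr}`. -/
def dirichlet (N : ℕ) (t : ℝ) : ℂ := dirichletD N 0 t

/-- partial derivative `∂_τ^{m'} ∂_f^{n'}` of the atom `a(r)`,
entry `(k,l)`:  `(-1)^{m'+n'} D_N^{(m')}(l/L - τ) D_N^{(n')}(k/L - f)`. -/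
def atomD (N : ℕ) (m' n' : ℕ) (r : ℝ × ℝ) : Idx N × Idx N → ℂ :=
  fun kl => (-1 : ℂ) ^ (m' + n') *
    dirichletD N m' (tv N kl.2 / Lr N - r.1) * dirichletD N n' (tv N kl.1 / Lr N - r.2)

/-- the atom `a(r)`, with `[a(r)]_{(k,l)} = D_N(l/L-τ) D_N(k/L-f)`. -/
def atom (N : ℕ) (r : ℝ × ℝ) : Idx N × Idx N → ℂ := atomD N 0 0 r

/-- the matrix `D̃_p`, with row `(k,l)` equal to `e^{i2πpk/L} d_{p-l}^H`. -/
def Dtil (N K : ℕ) (d : ℤ → Fin K → ℂ) (p : Idx N) :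
    Matrix (Idx N × Idx N) (Fin K) ℂ :=
  Matrix.of fun kl j => e2 (tv N p * tv N kl.1 / Lr N) * star (d (toZ N p - toZ N kl.2) j)

/-- the `i`-th column `d̂_i` of `D = [d_{-N},…,d_N]^H`. -/
def dhat (N K : ℕ) (d : ℤ → Fin K → ℂ) (i : Fin K) : Idx N → ℂ :=
  fun l => star (d (toZ N l) i)

/-- `L`-periodicity of the family `d`. -/
def Periodic (N : ℕ) {K : ℕ} (d : ℤ → Fin K → ℂ) : Prop :=
  ∀ l : ℤ, d (l + (2 * N + 1 : ℤ)) = d l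

/-- Euclidean (`ℓ²`) norm of a finite complex vector. -/
def enorm2 {ι : Type} [Fintype ι] (v : ι → ℂ) : ℝ := Real.sqrt (∑ i, ‖v i‖ ^ 2)

/-- spectral norm (operator norm with respect to Euclidean norms). -/
def specNorm {ι κ : Type} [Fintype ι] [Fintype κ] (A : Matrix ι κ ℂ) : ℝ :=
  sSup {x : ℝ | ∃ v : κ → ℂ, enorm2 v ≤ 1 ∧ x = enorm2 (A.mulVec v)}

/-- Frobenius norm. -/
def frobNorm {ι κ : Type} [Fintype ι] [Fintype κ] (A : Matrix ι κ ℂ) : ℝ :=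
  Real.sqrt (∑ i, ∑ j, ‖A i j‖ ^ 2)

/-- the square `[0,1]²`. -/
def box : Set (ℝ × ℝ) := Set.Icc (0 : ℝ) 1 ×ˢ Set.Icc (0 : ℝ) 1

/-- `sign(c) = c / |c|`. -/
def csign (c : ℂ) : ℂ := c / ((‖c‖ : ℝ) : ℂ)

/-- the rank-one atom `h a(r)^H`. -/
def outerAtom (N K : ℕ) (h : Fin K → ℂ) (r : ℝ × ℝ) :
    Matrix (Fin K) (Idx N × Idx N) ℂ :=
  Matrix.of fun i kl => h i * star (atom N r kl)

/-- the atomic norm `‖U‖_A`. -/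
def atomicNorm (N K : ℕ) (U : Matrix (Fin K) (Idx N × Idx N) ℂ) : ℝ :=
  sInf {t : ℝ | ∃ (n : ℕ) (c : Fin n → ℂ) (rs : Fin n → ℝ × ℝ) (hs : Fin n → Fin K → ℂ),
    (∀ i, rs i ∈ box) ∧ (∀ i, enorm2 (hs i) = 1) ∧
    U = ∑ i, c i • outerAtom N K (hs i) (rs i) ∧ t = ∑ i, ‖c i‖}

/-- the ground-truth matrix `U = ∑_j c_j h_j a(r_j)^H`. -/
def Umat (N K R : ℕ) (c : Fin R → ℂ) (h : Fin R → Fin K → ℂ) (rr : Fin R → ℝ × ℝ) :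
    Matrix (Fin K) (Idx N × Idx N) ℂ :=
  ∑ j, c j • outerAtom N K (h j) (rr j)

/-- feasibility for problem `P₁`: `Ũ` has the same measurements as `U`. -/
def Feasible (N K : ℕ) (d : ℤ → Fin K → ℂ)
    (U Ut : Matrix (Fin K) (Idx N × Idx N) ℂ) : Prop :=
  ∀ p : Idx N, (Dtil N K d p * Ut).trace = (Dtil N K d p * U).trace

/-- wrap-around distance on the unit circle. -/
def wrapDist (x y : ℝ) : ℝ := min (Int.fract (x - y)) (1 - Int.fract (x - y))

/-- wrap-around sup-distance on `[0,1)²`. -/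
def wrapSup (r s : ℝ × ℝ) : ℝ := max (wrapDist r.1 s.1) (wrapDist r.2 s.2)

/-- the minimum-separation condition. -/
def MinSep (N R : ℕ) (rr : Fin R → ℝ × ℝ) : Prop :=
  Function.Injective rr ∧ ∀ j j', j ≠ j' → 2.38 / N ≤ wrapSup (rr j) (rr j')

/-- `T = N/2 + 1`. -/
def Tnum (N : ℕ) : ℝ := (N : ℝ) / 2 + 1

/-- `T = N/2 + 1` as an integer. -/
def TnumZ (N : ℕ) : ℤ := (N : ℤ) / 2 + 1

/-- Fourier coefficients of the squared Fejér kernel. -/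
def gcoef (N : ℕ) (n : ℤ) : ℝ :=
  (Tnum N)⁻¹ * ∑ l ∈ Finset.Icc (max (n - TnumZ N) (-TnumZ N)) (min (n + TnumZ N) (TnumZ N)),
    (1 - |(l : ℝ)| / Tnum N) * (1 - |(n : ℝ) - (l : ℝ)| / Tnum N)

/-- the squared Fejér kernel. -/
def Fejer (N : ℕ) (t : ℝ) : ℝ :=
  (Real.sin (Tnum N * Real.pi * t) / (Tnum N * Real.sin (Real.pi * t))) ^ 4

/-- `a`-th derivative of the squared Fejér kernel. -/
def FejerD (N : ℕ) (a : ℕ) : ℝ → ℝ := iteratedDeriv a (Fejer N)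

/-- `μ = √|F''(0)|`. -/
def mu (N : ℕ) : ℝ := Real.sqrt |FejerD N 2 0|

/-- the vector `z_p(r_j)_{(m,n)}`. -/
def zvec (N : ℕ) (m n : ℕ) (p : Idx N) (rj : ℝ × ℝ) : Idx N × Idx N → ℂ :=
  fun kl =>
    (gcoef N (toZ N kl.1) : ℂ) * (Complex.I * (2 * Real.pi * tv N kl.1)) ^ m *
      ((gcoef N (toZ N p) : ℂ) * (Complex.I * (2 * Real.pi * tv N p)) ^ n) *
      e2 (tv N kl.1 * (tv N p + tv N kl.2) / Lr N) *
      e2 (-(tv N kl.1 * rj.1 + tv N p * rj.2))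

/-- the random kernel matrix `M^{(m',n')}_{(m,n)}(r, r_j)` (with `m' = n' = 0` this is
`M_{(m,n)}(r,r_j) = (1/T²) ∑_p D̃_p^H a(r) z_p(r_j)_{(m,n)}^H D̃_p`, and the parameters
`m', n'` give its partial derivatives in `r = (τ,f)`). -/
def Mker (N K : ℕ) (d : ℤ → Fin K → ℂ) (m n m' n' : ℕ) (r rj : ℝ × ℝ) :
    Matrix (Fin K) (Fin K) ℂ :=
  ((Tnum N : ℂ) ^ 2)⁻¹ •
    ∑ p : Idx N,
      Matrix.vecMulVec ((Dtil N K d p)ᴴ.mulVec (atomD N m' n' r))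
        (Matrix.vecMul (star (zvec N m n p rj)) (Dtil N K d p))

/-- the deterministic matrix `R^{(m',n')}_{(m,n)}(r, r_j)`. -/
def Rmat (N : ℕ) (m n m' n' : ℕ) (r rj : ℝ × ℝ) : Matrix (Idx N) (Idx N) ℂ :=
  Matrix.of fun l l' =>
    (Lr N : ℂ)⁻¹ * ∑ p : Idx N, ((Tnum N : ℂ) ^ 2)⁻¹ *
      ∑ k : Idx N, ∑ k' : Idx N,
        (gcoef N (toZ N k') : ℂ) * (-(Complex.I * (2 * Real.pi * tv N k'))) ^ m *
          (-(Complex.I * (2 * Real.pi * tv N k))) ^ m' *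
          (gcoef N (toZ N p) : ℂ) * (-(Complex.I * (2 * Real.pi * tv N p))) ^ (n + n') *
          e2 (tv N k * (tv N p - tv N l) / Lr N) *
          e2 (-(tv N k' * (tv N p - tv N l') / Lr N)) *
          e2 (-(tv N k * r.1 - tv N k' * rj.1)) *
          e2 (-(tv N p * (r.2 - rj.2)))

/-- derivative pairs indexing the three block rows/columns: `(0,0), (1,0), (0,1)`. -/
def mnF : Fin 3 → ℕ × ℕ := ![(0, 0), (1, 0), (0, 1)]

/-- block signs `+1, -1, -1`. -/
def sgnF : Fin 3 → ℂ := ![1, -1, -1]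

/-- total derivative order of a block index. -/
def wtF (i : Fin 3) : ℕ := (mnF i).1 + (mnF i).2

/-- the `3RK × 3RK` interpolation matrix `E`. -/
def Emat (N K R : ℕ) (d : ℤ → Fin K → ℂ) (rr : Fin R → ℝ × ℝ) :
    Matrix (Fin 3 × Fin R × Fin K) (Fin 3 × Fin R × Fin K) ℂ :=
  Matrix.of fun a b =>
    sgnF a.1 * ((mu N : ℂ) ^ (wtF a.1 + wtF b.1))⁻¹ *
      Mker N K d (mnF b.1).1 (mnF b.1).2 (mnF a.1).1 (mnF a.1).2 (rr a.2.1) (rr b.2.1)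
        a.2.2 b.2.2

/-- `M̄^{(a,b)}(r) = F^{(a)}(τ) F^{(b)}(f)`. -/
def Mbar (N : ℕ) (a b : ℕ) (r : ℝ × ℝ) : ℂ := ((FejerD N a r.1 * FejerD N b r.2 : ℝ) : ℂ)

/-- the `3R × 3R` deterministic matrix `E̅`. -/
def Ebar (N R : ℕ) (rr : Fin R → ℝ × ℝ) : Matrix (Fin 3 × Fin R) (Fin 3 × Fin R) ℂ :=
  Matrix.of fun a b =>
    sgnF a.1 * ((mu N : ℂ) ^ (wtF a.1 + wtF b.1))⁻¹ *
      Mbar N ((mnF a.1).1 + (mnF b.1).1) ((mnF a.1).2 + (mnF b.1).2) (rr a.2 - rr b.2)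

/-- `E̅ ⊗ I_K`. -/
def EbarKron (N K R : ℕ) (rr : Fin R → ℝ × ℝ) :
    Matrix (Fin 3 × Fin R × Fin K) (Fin 3 × Fin R × Fin K) ℂ :=
  Matrix.of fun a b =>
    Ebar N R rr (a.1, a.2.1) (b.1, b.2.1) * (if a.2.2 = b.2.2 then 1 else 0)

/-- the `3RK × K` matrix `T^{(m',n')}(r)`. -/
def Tmat (N K R : ℕ) (d : ℤ → Fin K → ℂ) (rr : Fin R → ℝ × ℝ) (m' n' : ℕ) (r : ℝ × ℝ) :
    Matrix (Fin 3 × Fin R × Fin K) (Fin K) ℂ :=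
  Matrix.of fun a k =>
    ((mu N : ℂ) ^ (m' + n' + wtF a.1))⁻¹ *
      star (Mker N K d (mnF a.1).1 (mnF a.1).2 m' n' r (rr a.2.1) k a.2.2)

/-- `L_mat`: the first `RK` columns of `E⁻¹`. -/
def Lmat (N K R : ℕ) (d : ℤ → Fin K → ℂ) (rr : Fin R → ℝ × ℝ) :
    Matrix (Fin 3 × Fin R × Fin K) (Fin R × Fin K) ℂ :=
  Matrix.of fun a b => (Emat N K R d rr)⁻¹ a (0, b.1, b.2)

/-- `L̄ ⊗ I_K`, where `L̄` consists of the first `R` columns of `E̅⁻¹`. -/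
def LbarKron (N K R : ℕ) (rr : Fin R → ℝ × ℝ) :
    Matrix (Fin 3 × Fin R × Fin K) (Fin R × Fin K) ℂ :=
  Matrix.of fun a b => (Ebar N R rr)⁻¹ (a.1, a.2.1) (0, b.1) * (if a.2.2 = b.2 then 1 else 0)

/-- the stacked vector `h = (sign(c_1) h_1; …; sign(c_R) h_R)`. -/
def hvec (K R : ℕ) (c : Fin R → ℂ) (h : Fin R → Fin K → ℂ) : Fin R × Fin K → ℂ :=
  fun b => csign (c b.1) * h b.1 b.2

/-- the vector `(h; 0_{RK}; 0_{RK})`. -/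
def hfull (K R : ℕ) (c : Fin R → ℂ) (h : Fin R → Fin K → ℂ) :
    Fin 3 × Fin R × Fin K → ℂ :=
  fun a => if a.1 = 0 then csign (c a.2.1) * h a.2.1 a.2.2 else 0

/-- the dual polynomial `f^{(m',n')}(r)`, built from the coefficients
`(α; μβ; μγ) = E⁻¹ (h; 0; 0)`. -/
def fpoly (N K R : ℕ) (d : ℤ → Fin K → ℂ) (rr : Fin R → ℝ × ℝ)
    (c : Fin R → ℂ) (h : Fin R → Fin K → ℂ) (m' n' : ℕ) (r : ℝ × ℝ) : Fin K → ℂ :=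
  fun k => ∑ a : Fin 3 × Fin R × Fin K,
    Mker N K d (mnF a.1).1 (mnF a.1).2 m' n' r (rr a.2.1) k a.2.2 *
      ((mu N : ℂ) ^ (wtF a.1))⁻¹ *
      (Emat N K R d rr)⁻¹.mulVec (hfull K R c h) a

/-- the deterministic polynomial `f̄^{(m',n')}(r)`, built from
`(ᾱ; μβ̄; μγ̄) = (E̅ ⊗ I_K)⁻¹ (h; 0; 0)`. -/
def fbar (N K R : ℕ) (rr : Fin R → ℝ × ℝ)
    (c : Fin R → ℂ) (h : Fin R → Fin K → ℂ) (m' n' : ℕ) (r : ℝ × ℝ) : Fin K → ℂ :=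
  fun k => ∑ i : Fin 3, ∑ j : Fin R,
    Mbar N (m' + (mnF i).1) (n' + (mnF i).2) (r - rr j) *
      ((mu N : ℂ) ^ (wtF i))⁻¹ *
      (EbarKron N K R rr)⁻¹.mulVec (hfull K R c h) (i, j, k)

/-- the vector polynomial `f(r) = ∑_p q_p D̃_p^H a(r)`. -/
def fq (N K : ℕ) (d : ℤ → Fin K → ℂ) (q : Idx N → ℂ) (r : ℝ × ℝ) : Fin K → ℂ :=
  fun k => ∑ p : Idx N, q p * (Dtil N K d p)ᴴ.mulVec (atom N r) k

/-- the matrix with rows `a(r)^H D̃_p`, `p = -N,…,N`. -/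
def Bmat (N K : ℕ) (d : ℤ → Fin K → ℂ) (r : ℝ × ℝ) : Matrix (Idx N) (Fin K) ℂ :=
  Matrix.of fun p k => Matrix.vecMul (star (atom N r)) (Dtil N K d p) k

section Probabilistic

variable {Ω : Type} [MeasureSpace Ω]

/-- Assumption A1. -/
def A1 (N K : ℕ) (d : Ω → ℤ → Fin K → ℂ) : Prop :=
  (∀ ω, Periodic N (d ω)) ∧
  iIndepFun (fun (l : Idx N) (ω : Ω) => d ω (toZ N l)) ℙ ∧
  (∀ l : Idx N, iIndepFun (fun (j : Fin K) (ω : Ω) => d ω (toZ N l) j) ℙ) ∧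
  (∀ (l : Idx N) (j : Fin K),
    IndepFun (fun ω => (d ω (toZ N l) j).re) (fun ω => (d ω (toZ N l) j).im) ℙ) ∧
  (∀ (l : Idx N) (j : Fin K), ∫ ω, d ω (toZ N l) j ∂ℙ = 0) ∧
  (∀ (l : Idx N) (j j' : Fin K),
    ∫ ω, d ω (toZ N l) j * star (d ω (toZ N l) j') ∂ℙ = if j = j' then 1 else 0)

/-- Assumption A2 (`K̃`-concentration of the columns of `D`). -/
def A2 (N K : ℕ) (Kt : ℝ) (d : Ω → ℤ → Fin K → ℂ) : Prop :=
  1 ≤ Kt ∧ ∃ Cc1 Cc2 : ℝ, 0 < Cc1 ∧ 0 < Cc2 ∧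
    ∀ (i : Fin K) (φ : EuclideanSpace ℂ (Idx N) → ℝ), LipschitzWith 1 φ →
      ∀ t : ℝ, 0 < t →
        ℙ {ω | t ≤ |φ ((WithLp.equiv 2 (Idx N → ℂ)).symm (dhat N K (d ω) i)) -
            ∫ ω', φ ((WithLp.equiv 2 (Idx N → ℂ)).symm (dhat N K (d ω') i)) ∂ℙ|} ≤
          ENNReal.ofReal (Cc1 * Real.exp (-Cc2 * t ^ 2 / Kt ^ 2))

/-- Assumption A3 (`h_j` i.i.d. uniform on the complex unit sphere, independent of `d`). -/
def A3 (K R : ℕ) (d : Ω → ℤ → Fin K → ℂ) (h : Ω → Fin R → Fin K → ℂ) : Prop :=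
  (∀ ω j, enorm2 (h ω j) = 1) ∧
  iIndepFun (fun (j : Fin R) (ω : Ω) => h ω j) ℙ ∧
  (∀ j j' : Fin R, Measure.map (fun ω => h ω j) ℙ = Measure.map (fun ω => h ω j') ℙ) ∧
  (∀ (j : Fin R) (U : (Fin K → ℂ) →ₗ[ℂ] (Fin K → ℂ)), (∀ v, enorm2 (U v) = enorm2 v) →
    Measure.map (fun ω => U (h ω j)) ℙ = Measure.map (fun ω => h ω j) ℙ) ∧
  IndepFun d h ℙ

/-- entrywise expectation of the random kernel matrix. -/
def MkerExp (N K : ℕ) (d : Ω → ℤ → Fin K → ℂ) (m n m' n' : ℕ) (r rj : ℝ × ℝ) :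
    Matrix (Fin K) (Fin K) ℂ :=
  Matrix.of fun i j => ∫ ω, Mker N K (d ω) m n m' n' r rj i j ∂ℙ

/-- entrywise expectation of `T^{(m',n')}(r)`. -/
def TmatExp (N K R : ℕ) (d : Ω → ℤ → Fin K → ℂ) (rr : Fin R → ℝ × ℝ)
    (m' n' : ℕ) (r : ℝ × ℝ) : Matrix (Fin 3 × Fin R × Fin K) (Fin K) ℂ :=
  Matrix.of fun a k => ∫ ω, Tmat N K R (d ω) rr m' n' r a k ∂ℙ

end Probabilistic

end Blind2D
namespace Blind2D

section Helpers

private lemma Lr_pos (N : ℕ) : (0:ℝ) < Lr N := by unfold Lr; positivity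

private lemma Lr_ne (N : ℕ) : (Lr N : ℝ) ≠ 0 := (Lr_pos N).ne'

private lemma LrC_ne (N : ℕ) : (Lr N : ℂ) ≠ 0 := by
  exact_mod_cast Complex.ofReal_ne_zero.mpr (Lr_ne N)

private lemma e2_add (x y : ℝ) : e2 (x + y) = e2 x * e2 y := by
  unfold e2; rw [← Complex.exp_add]; congr 1; push_cast; ring

private lemma e2_int (n : ℤ) : e2 (n : ℝ) = 1 := by
  unfold e2
  rw [show Complex.I * (2 * (Real.pi:ℂ) * ((n:ℝ):ℂ)) = (n:ℤ) * (2 * Real.pi * Complex.I) by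
    push_cast; ring]
  exact Complex.exp_int_mul_two_pi_mul_I n

private lemma e2_sub_int (x : ℝ) (n : ℤ) : e2 (x - n) = e2 x := by
  have h := e2_add (x - n) n
  rw [sub_add_cancel, e2_int, mul_one] at h
  exact h.symm

private lemma e2_nat_mul (x : ℝ) (n : ℕ) : e2 ((n : ℝ) * x) = e2 x ^ n := by
  unfold e2; rw [← Complex.exp_nat_mul]; congr 1; push_cast; ring

private lemma e2_eq_one_iff {x : ℝ} : e2 x = 1 ↔ ∃ n : ℤ, x = (n : ℝ) := by
  unfold e2
  rw [Complex.exp_eq_one_iff]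
  constructor
  · rintro ⟨n, hn⟩
    refine ⟨n, ?_⟩
    have h0 : (2 * (Real.pi:ℂ) * Complex.I) ≠ 0 := by
      simp [Real.pi_ne_zero, Complex.I_ne_zero]
    have h1 : (2 * (Real.pi:ℂ) * Complex.I) * x = (2 * (Real.pi:ℂ) * Complex.I) * n := by
      linear_combination hn
    have hx := mul_left_cancel₀ h0 h1
    exact_mod_cast hx
  · rintro ⟨n, rfl⟩
    exact ⟨n, by push_cast; ring⟩

private lemma e2_ne_zero (x : ℝ) : e2 x ≠ 0 := Complex.exp_ne_zero _

/-- geometric sum: if `L ∤ m` then `∑_k e^{i2π k m/L} = 0`. -/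
private lemma sum_e2_geom (N : ℕ) (m : ℤ) (hm : ¬ ((2*(N:ℤ)+1) ∣ m)) :
    ∑ k : Idx N, e2 ((m : ℝ) * tv N k / Lr N) = 0 := by
  set x : ℂ := e2 ((m:ℝ) / Lr N) with hx
  have hterm : ∀ k : Idx N, e2 ((m:ℝ) * tv N k / Lr N)
      = e2 (-((N:ℝ) * m) / Lr N) * x ^ (k : ℕ) := by
    intro k
    rw [hx, ← e2_nat_mul, ← e2_add]
    congr 1
    unfold tv toZ Lr
    push_cast
    field_simp
    ring
  have hxne : x ≠ 1 := by
    intro h1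
    obtain ⟨n, hn⟩ := e2_eq_one_iff.mp (hx ▸ h1)
    apply hm
    refine ⟨n, ?_⟩
    have : (m : ℝ) = (2*(N:ℝ)+1) * n := by
      rw [div_eq_iff (Lr_ne N)] at hn
      rw [hn]; unfold Lr; ring
    exact_mod_cast this
  have hxL : x ^ (2*N+1) = 1 := by
    rw [hx, ← e2_nat_mul]
    rw [show ((2*N+1 : ℕ) : ℝ) * ((m:ℝ) / Lr N) = (m:ℝ) by
      unfold Lr; push_cast; field_simp]
    exact e2_int m
  calc ∑ k : Idx N, e2 ((m:ℝ) * tv N k / Lr N)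
      = ∑ k : Idx N, e2 (-((N:ℝ) * m) / Lr N) * x ^ (k : ℕ) := Finset.sum_congr rfl (fun k _ => hterm k)
    _ = e2 (-((N:ℝ) * m) / Lr N) * ∑ i ∈ Finset.range (2*N+1), x ^ i := by
        rw [← Finset.mul_sum, Fin.sum_univ_eq_sum_range (fun i => x ^ i)]
    _ = 0 := by
        rw [geom_sum_eq hxne, hxL]
        simp

/-- the reversed index with `toZ (rev p) = - toZ p`. -/
private def rev (N : ℕ) (p : Idx N) : Idx N := ⟨2*N - p.val, by omega⟩

private lemma tv_rev (N : ℕ) (p : Idx N) : tv N (rev N p) = -tv N p := by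
  unfold tv toZ rev
  have hp : p.val ≤ 2*N := by omega
  push_cast [hp]
  ring

private lemma sum_e2_ortho (N : ℕ) (r p : Idx N) :
    ∑ k : Idx N, e2 (tv N k * (tv N r + tv N p) / Lr N)
      = if r = rev N p then (Lr N : ℂ) else 0 := by
  by_cases hr : r = rev N p
  · subst hr
    rw [if_pos rfl]
    have : ∀ k : Idx N, e2 (tv N k * (tv N (rev N p) + tv N p) / Lr N) = 1 := by
      intro k
      rw [tv_rev]
      rw [show tv N k * (-tv N p + tv N p) / Lr N = ((0:ℤ):ℝ) by push_cast; ring]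
      exact e2_int 0
    rw [Finset.sum_congr rfl (fun k _ => this k)]
    simp only [Finset.sum_const, Finset.card_univ, Fintype.card_fin, nsmul_eq_mul, mul_one]
    unfold Lr
    push_cast
    ring
  · rw [if_neg hr]
    set m : ℤ := toZ N r + toZ N p with hmdef
    have hm0 : m ≠ 0 := by
      intro h0
      apply hr
      have : r.val = 2*N - p.val := by unfold toZ at hmdef; omega
      exact Fin.ext (by simpa [rev] using this)
    have habs : |m| < 2*(N:ℤ)+1 := by
      have h1 := r.isLt; have h2 := p.isLt
      unfold toZ at hmdef
      rw [abs_lt]; omega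
    have hdvd : ¬ ((2*(N:ℤ)+1) ∣ m) := by
      intro hd
      exact hm0 (Int.eq_zero_of_abs_lt_dvd hd habs)
    have harg : ∀ k : Idx N, tv N k * (tv N r + tv N p) / Lr N = (m:ℝ) * tv N k / Lr N := by
      intro k
      unfold tv
      rw [hmdef]
      push_cast
      ring
    rw [Finset.sum_congr rfl (fun k _ => by rw [harg k])]
    exact sum_e2_geom N m hdvd

/-- the key `k`-sum: `∑_k D_N(k/L - f) e^{i2π p k / L} = e^{i2π p f}`. -/
private lemma sum_dirichlet_e2 (N : ℕ) (p : Idx N) (f : ℝ) :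
    ∑ k : Idx N, dirichlet N (tv N k / Lr N - f) * e2 (tv N p * tv N k / Lr N)
      = e2 (tv N p * f) := by
  unfold dirichlet dirichletD
  simp only [pow_zero, one_mul]
  have key : ∀ (k r : Idx N),
      e2 ((tv N k / Lr N - f) * tv N r) * e2 (tv N p * tv N k / Lr N)
        = e2 (-(f * tv N r)) * e2 (tv N k * (tv N r + tv N p) / Lr N) := by
    intro k r
    rw [← e2_add, ← e2_add]
    congr 1
    ring
  calc ∑ k : Idx N, ((Lr N:ℂ)⁻¹ * ∑ r : Idx N, e2 ((tv N k / Lr N - f) * tv N r))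
          * e2 (tv N p * tv N k / Lr N)
      = ∑ k : Idx N, ∑ r : Idx N,
          (Lr N:ℂ)⁻¹ * (e2 (-(f * tv N r)) * e2 (tv N k * (tv N r + tv N p) / Lr N)) := by
        refine Finset.sum_congr rfl fun k _ => ?_
        rw [Finset.mul_sum, Finset.sum_mul]
        refine Finset.sum_congr rfl fun r _ => ?_
        rw [mul_assoc, key k r]
    _ = ∑ r : Idx N, (Lr N:ℂ)⁻¹ * e2 (-(f * tv N r))
          * ∑ k : Idx N, e2 (tv N k * (tv N r + tv N p) / Lr N) := by
        rw [Finset.sum_comm]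
        refine Finset.sum_congr rfl fun r _ => ?_
        rw [Finset.mul_sum]
        refine Finset.sum_congr rfl fun k _ => by ring
    _ = ∑ r : Idx N, (Lr N:ℂ)⁻¹ * e2 (-(f * tv N r))
          * (if r = rev N p then (Lr N : ℂ) else 0) := by
        refine Finset.sum_congr rfl fun r _ => by rw [sum_e2_ortho]
    _ = (Lr N:ℂ)⁻¹ * e2 (-(f * tv N (rev N p))) * (Lr N : ℂ) := by
        simp only [mul_ite, mul_zero]
        rw [Finset.sum_ite_eq' Finset.univ (rev N p)
          (fun r => (Lr N:ℂ)⁻¹ * e2 (-(f * tv N r)) * (Lr N : ℂ)), if_pos (Finset.mem_univ _)]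
    _ = e2 (tv N p * f) := by
        rw [tv_rev, show -(f * -tv N p) = tv N p * f by ring]
        rw [mul_comm ((Lr N:ℂ)⁻¹) _, mul_assoc, inv_mul_cancel₀ (LrC_ne N), mul_one]

end Helpers


/-- reindexing the `l`-sum using periodicity of `d`. -/
private lemma sum_reindex (N K : ℕ) (d : ℤ → Fin K → ℂ) (hper : Periodic N d)
    (p k : Idx N) (g : Fin K → ℂ) :
    ∑ l : Idx N, (∑ a : Fin K, star (d (toZ N l) a) * g a)
        * e2 (tv N k * (tv N p - tv N l) / Lr N)
      = ∑ l : Idx N, (∑ a : Fin K, star (d (toZ N p - toZ N l) a) * g a)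
        * e2 (tv N k * tv N l / Lr N) := by
  set σ : Idx N ≃ Idx N := Equiv.subLeft (p + (⟨N, by omega⟩ : Idx N)) with hσ
  refine (Fintype.sum_equiv σ _ _ fun l => ?_).symm
  have hq : (σ l).val = ((2*N+1 - l.val) + (p.val + N) % (2*N+1)) % (2*N+1) := by
    show ((p + (⟨N, by omega⟩ : Idx N)) - l).val = _
    simp [Fin.sub_def, Fin.add_def]
  have key : ∀ a : ℕ, ((2*(N:ℤ)+1)) ∣ ((a % (2*N+1) : ℕ) : ℤ) - (a : ℤ) := by
    intro a
    refine ⟨-((a:ℤ) / (2*(N:ℤ)+1)), ?_⟩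
    rw [Int.natCast_mod]
    rw [Int.emod_def]
    push_cast
    ring
  have hle : l.val ≤ 2*N+1 := by omega
  obtain ⟨c1, hc1⟩ := key ((2*N+1 - l.val) + (p.val + N) % (2*N+1))
  obtain ⟨c2, hc2⟩ := key (p.val + N)
  have hm' : toZ N (σ l) = toZ N p - toZ N l + (2*(N:ℤ)+1) * (c1 + c2 + 1) := by
    unfold toZ
    rw [show ((σ l : Idx N) : ℤ) = ((((2*N+1 - l.val) + (p.val + N) % (2*N+1)) % (2*N+1) : ℕ) : ℤ) from
      by exact_mod_cast congrArg (Nat.cast : ℕ → ℤ) hq]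
    push_cast [Nat.cast_sub hle] at hc1 hc2 ⊢
    linarith [hc1, hc2]
  set m : ℤ := c1 + c2 + 1
  have hd : d (toZ N p - toZ N l) = d (toZ N (σ l)) := by
    have hp : Function.Periodic d ((2*N+1 : ℤ)) := hper
    have harg : toZ N p - toZ N l = toZ N (σ l) - m * (2*(N:ℤ)+1) := by linarith [hm']
    rw [harg]
    exact hp.sub_int_mul_eq m
  have he : e2 (tv N k * (tv N p - tv N (σ l)) / Lr N) = e2 (tv N k * tv N l / Lr N) := by
    have hmr : tv N (σ l) = tv N p - tv N l + (2*(N:ℝ)+1) * m := by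
      unfold tv; exact_mod_cast congrArg (Int.cast : ℤ → ℝ) hm'
    rw [hmr, show tv N k * (tv N p - (tv N p - tv N l + (2*(N:ℝ)+1) * (m:ℝ))) / Lr N
        = tv N k * tv N l / Lr N - ((toZ N k * m : ℤ) : ℝ) by
      unfold tv Lr; push_cast; field_simp; ring]
    exact e2_sub_int _ _
  rw [hd, he]



private lemma main_core (N : ℕ) (p : Idx N) (τj fj : ℝ) (A B : Idx N → ℂ)
    (hAB : ∀ k : Idx N, ∑ l : Idx N, A l * e2 (tv N k * (tv N p - tv N l) / Lr N)
        = ∑ l : Idx N, B l * e2 (tv N k * tv N l / Lr N)) :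
    (Lr N : ℂ)⁻¹ * ∑ k : Idx N, ∑ l : Idx N,
        A l * e2 (tv N k * (tv N p - tv N l) / Lr N) * e2 (tv N p * fj - tv N k * τj)
      = ∑ k : Idx N, ∑ l : Idx N,
          dirichlet N (tv N k / Lr N - fj) * dirichlet N (tv N l / Lr N - τj) * B l
            * e2 (tv N p * tv N k / Lr N) := by
  have step1 : ∀ k : Idx N,
      ∑ l : Idx N, A l * e2 (tv N k * (tv N p - tv N l) / Lr N) * e2 (tv N p * fj - tv N k * τj)
        = e2 (tv N p * fj) * (e2 (-(τj * tv N k))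
            * ∑ l : Idx N, B l * e2 (tv N k * tv N l / Lr N)) := by
    intro k
    rw [← Finset.sum_mul, hAB k,
      show tv N p * fj - tv N k * τj = (tv N p * fj) + (-(τj * tv N k)) by ring, e2_add]
    ring
  have step3 : ∑ l : Idx N, dirichlet N (tv N l / Lr N - τj) * B l
      = (Lr N:ℂ)⁻¹ * ∑ k : Idx N, e2 (-(τj * tv N k))
          * ∑ l : Idx N, B l * e2 (tv N k * tv N l / Lr N) := by
    unfold dirichlet dirichletD
    simp only [pow_zero, one_mul]
    calc ∑ l : Idx N, ((Lr N:ℂ)⁻¹ * ∑ s : Idx N, e2 ((tv N l / Lr N - τj) * tv N s)) * B l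
        = ∑ l : Idx N, ∑ s : Idx N,
            (Lr N:ℂ)⁻¹ * (e2 (-(τj * tv N s)) * (B l * e2 (tv N s * tv N l / Lr N))) := by
          refine Finset.sum_congr rfl fun l _ => ?_
          rw [Finset.mul_sum, Finset.sum_mul]
          refine Finset.sum_congr rfl fun s _ => ?_
          rw [show (tv N l / Lr N - τj) * tv N s
              = tv N s * tv N l / Lr N + (-(τj * tv N s)) by ring, e2_add]
          ring
      _ = ∑ s : Idx N, ∑ l : Idx N,
            (Lr N:ℂ)⁻¹ * (e2 (-(τj * tv N s)) * (B l * e2 (tv N s * tv N l / Lr N))) :=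
          Finset.sum_comm
      _ = (Lr N:ℂ)⁻¹ * ∑ s : Idx N, e2 (-(τj * tv N s))
            * ∑ l : Idx N, B l * e2 (tv N s * tv N l / Lr N) := by
          rw [Finset.mul_sum]
          refine Finset.sum_congr rfl fun s _ => ?_
          rw [Finset.mul_sum, Finset.mul_sum]
  have step2 : ∑ k : Idx N, ∑ l : Idx N,
        dirichlet N (tv N k / Lr N - fj) * dirichlet N (tv N l / Lr N - τj)
          * B l * e2 (tv N p * tv N k / Lr N)
      = e2 (tv N p * fj) * ∑ l : Idx N, dirichlet N (tv N l / Lr N - τj) * B l := by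
    calc ∑ k : Idx N, ∑ l : Idx N,
          dirichlet N (tv N k / Lr N - fj) * dirichlet N (tv N l / Lr N - τj)
            * B l * e2 (tv N p * tv N k / Lr N)
        = ∑ k : Idx N, (dirichlet N (tv N k / Lr N - fj) * e2 (tv N p * tv N k / Lr N))
            * ∑ l : Idx N, dirichlet N (tv N l / Lr N - τj) * B l := by
          refine Finset.sum_congr rfl fun k _ => ?_
          rw [Finset.mul_sum]
          refine Finset.sum_congr rfl fun l _ => by ring
      _ = (∑ k : Idx N, dirichlet N (tv N k / Lr N - fj) * e2 (tv N p * tv N k / Lr N))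
            * ∑ l : Idx N, dirichlet N (tv N l / Lr N - τj) * B l :=
          (Finset.sum_mul _ _ _).symm
      _ = e2 (tv N p * fj) * ∑ l : Idx N, dirichlet N (tv N l / Lr N - τj) * B l := by
          rw [sum_dirichlet_e2]
  calc (Lr N : ℂ)⁻¹ * ∑ k : Idx N, ∑ l : Idx N,
        A l * e2 (tv N k * (tv N p - tv N l) / Lr N) * e2 (tv N p * fj - tv N k * τj)
      = (Lr N : ℂ)⁻¹ * ∑ k : Idx N, e2 (tv N p * fj) * (e2 (-(τj * tv N k))
          * ∑ l : Idx N, B l * e2 (tv N k * tv N l / Lr N)) :=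
        congrArg _ (Finset.sum_congr rfl fun k _ => step1 k)
    _ = e2 (tv N p * fj) * ((Lr N:ℂ)⁻¹ * ∑ k : Idx N, e2 (-(τj * tv N k))
          * ∑ l : Idx N, B l * e2 (tv N k * tv N l / Lr N)) := by
        rw [← Finset.mul_sum]
        ring
    _ = e2 (tv N p * fj) * ∑ l : Idx N, dirichlet N (tv N l / Lr N - τj) * B l := by
        rw [step3]
    _ = ∑ k : Idx N, ∑ l : Idx N,
          dirichlet N (tv N k / Lr N - fj) * dirichlet N (tv N l / Lr N - τj) * B l
            * e2 (tv N p * tv N k / Lr N) := step2.symm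

/-- **Appendix A**: equivalence of the two expressions (2) and (3) for the sampled
model. -/
theorem sampled_model_identity
    (N K R : ℕ) (d : ℤ → Fin K → ℂ) (hper : Periodic N d)
    (p : Idx N) (τ f : Fin R → ℝ) (c : Fin R → ℂ) (h : Fin R → Fin K → ℂ) :
    ∑ j : Fin R, c j * ((Lr N : ℂ)⁻¹ * ∑ k : Idx N, ∑ l : Idx N,
        (∑ a : Fin K, star (d (toZ N l) a) * h j a) *
          e2 (tv N k * (tv N p - tv N l) / Lr N) *
          e2 (tv N p * f j - tv N k * τ j)) =
      ∑ j : Fin R, c j * ∑ k : Idx N, ∑ l : Idx N,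
        dirichlet N (tv N k / Lr N - f j) * dirichlet N (tv N l / Lr N - τ j) *
          (∑ a : Fin K, star (d (toZ N p - toZ N l) a) * h j a) *
          e2 (tv N p * tv N k / Lr N) := by
  refine Finset.sum_congr rfl fun j _ => ?_
  congr 1
  exact main_core N p (τ j) (f j) _ _ (fun k => sum_reindex N K d hper p k (h j))

end Blind2D
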